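/- Let X be the uniform probability mass function on Bool (the random first transition a_i, i ∈ {0,1}, from the uniform initial state). For every probability mass function Y on Bool (a memoryless choice of b_j at state B, independent of the first transition), the expected XOR reward satisfies ∑_x ∑_y (X x).toReal * (Y y).toReal * (if x ≠ y then (1:ℝ) else 0) = 1/2, whereas the history-dependent choice b_{1−i} attains ∑_x (X x).toReal * (if x ≠ (¬x) then (1:ℝ) else 0) = 1, and 1/2 < 1. Hence every policy whose action at B is independent of the first transition is strictly suboptimal. (This is the construction proving the second claim of the paper's Fact 2.1: there exists a DRMDP, with fixed interval length n = 2 and reward r(a_i, b_j) = i ⊕ j, such that none of its optimal policies lies in the memoryless class Π_s.) -/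

import Mathlib

/-- The XOR counterexample proving that some DRMDPs have no optimal policy in
the memoryless class `Π_s`: with the first transition `X` uniform on `Bool`,
every history-independent choice `Y` of the second transition attains expected
XOR reward `1/2`, while the history-dependent choice `b_{1−i}` attains `1`,
and `1/2 < 1`. -/
theorem memoryless_policy_suboptimal_xor :
    (∀ Y : PMF Bool,
      ∑ x : Bool, ∑ y : Bool,
        ((PMF.uniformOfFintype Bool) x).toReal * (Y y).toReal *
          (if x ≠ y then (1 : ℝ) else 0) = 1 / 2) ∧
    (∑ x : Bool,
      ((PMF.uniformOfFintype Bool) x).toReal *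
        (if x ≠ (!x) then (1 : ℝ) else 0) = 1) ∧
    (1 : ℝ) / 2 < 1 := by
  refine ⟨?_, ?_, by norm_num⟩
  · intro Y
    have hsum : (Y false).toReal + (Y true).toReal = 1 := by
      have h : ∑ y : Bool, Y y = 1 := by
        rw [← tsum_eq_sum (L := SummationFilter.unconditional Bool) (s := Finset.univ) (by simp)]
        exact Y.tsum_coe
      have h' : Y false + Y true = 1 := by simpa [Fintype.sum_bool, add_comm] using h
      have hf : Y false ≠ ⊤ := Y.apply_ne_top false
      have ht : Y true ≠ ⊤ := Y.apply_ne_top true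
      rw [← ENNReal.toReal_add hf ht, h', ENNReal.toReal_one]
    simp only [PMF.uniformOfFintype_apply, Fintype.card_bool, Fintype.sum_bool]
    norm_num
    linarith
  · simp [PMF.uniformOfFintype_apply, Fintype.sum_bool]
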